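/- arXiv:math/9303204 — 6 statements merged into one kernel-verified Lean document; each statement's English description precedes it below -/
import Mathlib

section
/- Let X be a Banach space, M a subspace of X*, and T: X → Y a surjective bounded operator with Y a Banach space. If T is strictly singular and M = T*(Y*), then M is nowhere norming: for every infinite-dimensional closed subspace L of X and every c > 0, there exists x in L with sup_{f ∈ M, ‖f‖ ≤ 1} |f(x)| < c‖x‖. -/
open NormedSpace Metric ZeroAtInfty Filter Topology

noncomputable def dualSup {X : Type*} [NormedAddCommGroup X] [NormedSpace ℝ X]
    (M : Submodule ℝ (StrongDual ℝ X)) (x : X) : ℝ :=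
  sSup {r : ℝ | ∃ f ∈ M, ‖f‖ ≤ 1 ∧ r = |f x|}

def IsTotalSub {X : Type*} [NormedAddCommGroup X] [NormedSpace ℝ X]
    (M : Submodule ℝ (StrongDual ℝ X)) : Prop :=
  ∀ x : X, x ≠ 0 → ∃ f ∈ M, f x ≠ 0

def IsNormingOver {X : Type*} [NormedAddCommGroup X] [NormedSpace ℝ X]
    (M : Submodule ℝ (StrongDual ℝ X)) (L : Submodule ℝ X) : Prop :=
  ∃ c > 0, ∀ x ∈ L, c * ‖x‖ ≤ dualSup M x

def IsNorming {X : Type*} [NormedAddCommGroup X] [NormedSpace ℝ X]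
    (M : Submodule ℝ (StrongDual ℝ X)) : Prop :=
  ∃ c > 0, ∀ x : X, c * ‖x‖ ≤ dualSup M x

def NowhereNorming {X : Type*} [NormedAddCommGroup X] [NormedSpace ℝ X]
    (M : Submodule ℝ (StrongDual ℝ X)) : Prop :=
  ∀ L : Submodule ℝ X, IsClosed (L : Set X) → ¬FiniteDimensional ℝ L →
    ∀ c > 0, ∃ x ∈ L, dualSup M x < c * ‖x‖

def StrictlySingular {X Y : Type*} [NormedAddCommGroup X] [NormedSpace ℝ X]
    [NormedAddCommGroup Y] [NormedSpace ℝ Y] (T : X →L[ℝ] Y) : Prop :=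
  ∀ L : Submodule ℝ X, IsClosed (L : Set X) → ¬FiniteDimensional ℝ L →
    ¬∃ c > 0, ∀ x ∈ L, c * ‖x‖ ≤ ‖T x‖

def Nonquasireflexive (X : Type*) [NormedAddCommGroup X] [NormedSpace ℝ X] : Prop :=
  ¬FiniteDimensional ℝ
    (StrongDual ℝ (StrongDual ℝ X) ⧸ LinearMap.range (inclusionInDoubleDual ℝ X).toLinearMap)

theorem stmt0 {X Y : Type*} [NormedAddCommGroup X] [NormedSpace ℝ X] [CompleteSpace X]
    [NormedAddCommGroup Y] [NormedSpace ℝ Y] [CompleteSpace Y]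
    (T : X →L[ℝ] Y) (hsurj : Function.Surjective T) (hss : StrictlySingular T)
    (M : Submodule ℝ (StrongDual ℝ X)) (hM : ∀ f, f ∈ M ↔ ∃ g : StrongDual ℝ Y, f = g.comp T) :
    NowhereNorming M := by
  obtain ⟨C, hC, hCy⟩ := T.exists_preimage_norm_le hsurj
  intro L hLclosed hLinf c hc
  have hss' := hss L hLclosed hLinf
  push_neg at hss'
  obtain ⟨x, hxL, hx⟩ := hss' (c / C) (div_pos hc hC)
  refine ⟨x, hxL, ?_⟩
  have hxne : (0:ℝ) < ‖x‖ := by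
    by_contra h
    push_neg at h
    have h0 : ‖x‖ = 0 := le_antisymm h (norm_nonneg x)
    rw [h0, mul_zero] at hx
    exact (norm_nonneg (T x)).not_gt hx
  -- dualSup M x ≤ C * ‖T x‖
  have key : dualSup M x ≤ C * ‖T x‖ := by
    apply Real.sSup_le
    · rintro r ⟨f, hfM, hf1, rfl⟩
      obtain ⟨g, rfl⟩ := (hM f).mp hfM
      -- ‖g‖ ≤ C * ‖g.comp T‖
      have hg : ‖g‖ ≤ C * ‖g.comp T‖ := by
        apply g.opNorm_le_bound (by positivity)
        intro y
        obtain ⟨z, hz, hznorm⟩ := hCy y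
        calc ‖g y‖ = ‖(g.comp T) z‖ := by rw [ContinuousLinearMap.comp_apply, hz]
          _ ≤ ‖g.comp T‖ * ‖z‖ := (g.comp T).le_opNorm z
          _ ≤ ‖g.comp T‖ * (C * ‖y‖) := by
              exact mul_le_mul_of_nonneg_left hznorm (norm_nonneg _)
          _ = C * ‖g.comp T‖ * ‖y‖ := by ring
      calc |(g.comp T) x| = ‖g (T x)‖ := rfl
        _ ≤ ‖g‖ * ‖T x‖ := g.le_opNorm _
        _ ≤ (C * ‖g.comp T‖) * ‖T x‖ :=
            mul_le_mul_of_nonneg_right hg (norm_nonneg _)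
        _ ≤ (C * 1) * ‖T x‖ := by
            apply mul_le_mul_of_nonneg_right _ (norm_nonneg _)
            exact mul_le_mul_of_nonneg_left hf1 hC.le
        _ = C * ‖T x‖ := by ring
    · positivity
  calc dualSup M x ≤ C * ‖T x‖ := key
    _ < C * (c / C * ‖x‖) := by
        apply mul_lt_mul_of_pos_left hx hC
    _ = c * ‖x‖ := by field_simp
end

section
/- Under the hypotheses of the previous construction, with M₁ = T*(Y*) for a quotient map T: X → Y, and Q as above with u_n* = T*(y_n*) for a weak* null sequence {y_n*} ⊆ Y*, the subspace M = Q(M₁) is total over X: for every nonzero x ∈ X there exists f ∈ M with f(x) ≠ 0. -/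
open NormedSpace Metric ZeroAtInfty Filter Topology

theorem stmt3 {X Y : Type*} [NormedAddCommGroup X] [NormedSpace ℝ X] [CompleteSpace X]
    [NormedAddCommGroup Y] [NormedSpace ℝ Y] [CompleteSpace Y]
    (T : X →L[ℝ] Y) (hsurj : Function.Surjective T)
    (hball : T '' Metric.ball 0 1 = Metric.ball 0 1)
    (y : ℕ → StrongDual ℝ Y)
    (hy : ∀ z : Y, Filter.Tendsto (fun n => y n z) Filter.atTop (nhds 0))
    (u : ℕ → StrongDual ℝ X) (hu : ∀ n, u n = (y n).comp T)
    (s : ℕ → StrongDual ℝ X) (hsn : ∀ k, ‖s k‖ = 1)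
    (hstotal : ∀ x : X, x ≠ 0 → ∃ k, s k x ≠ 0)
    (v : ℕ → StrongDual ℝ (StrongDual ℝ X)) (Cv : ℝ) (hvb : ∀ k, ‖v k‖ ≤ Cv) (hvne : ∀ k, v k ≠ 0)
    (I : ℕ → Set ℕ) (hIdisj : Pairwise (Function.onFun Disjoint I))
    (hIunion : (⋃ k, I k) = Set.univ) (hIinf : ∀ k, (I k).Infinite)
    (hbio : ∀ k n, (n ∈ I k → v k (u n) = 1) ∧ (n ∉ I k → v k (u n) = 0))
    (Q : StrongDual ℝ X →L[ℝ] StrongDual ℝ X)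
    (hQ : ∀ g : StrongDual ℝ X, Q g = g + ∑' k, ((v k g) / ((4 : ℝ) ^ k * ‖v k‖)) • s k) :
    ∀ x : X, x ≠ 0 → ∃ g : StrongDual ℝ Y, (Q (g.comp T)) x ≠ 0 := by
  intro x hx
  by_contra h
  push_neg at h
  have hsz : ∀ k, s k x = 0 := by
    intro k
    have hd : (0:ℝ) < (4:ℝ) ^ k * ‖v k‖ := by
      have : 0 < ‖v k‖ := (norm_nonneg _).lt_of_ne fun h => hvne k ((v k).opNorm_zero_iff.mp h.symm)
      positivity
    set c : ℝ := s k x / ((4:ℝ) ^ k * ‖v k‖) with hc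
    have key : ∀ n ∈ I k, y n (T x) = -c := by
      intro n hn
      have h0 := h (y n)
      rw [← hu n, hQ (u n)] at h0
      have hts : (∑' j, ((v j (u n)) / ((4 : ℝ) ^ j * ‖v j‖)) • s j)
          = ((1:ℝ) / ((4:ℝ) ^ k * ‖v k‖)) • s k := by
        rw [tsum_eq_single k]
        · rw [(hbio k n).1 hn]
        · intro j hj
          have hnj : n ∉ I j := by
            intro hnj
            exact (Set.disjoint_left.mp (hIdisj hj)) hnj hn
          rw [(hbio j n).2 hnj]
          simp
      rw [hts] at h0
      simp only [ContinuousLinearMap.add_apply, ContinuousLinearMap.coe_smul',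
        Pi.smul_apply, smul_eq_mul] at h0
      have hux : u n x = y n (T x) := by rw [hu n]; rfl
      rw [hux] at h0
      have : y n (T x) = -(1 / ((4:ℝ)^k * ‖v k‖) * s k x) := by linarith
      rw [this, hc]
      ring
    have h1 : Tendsto (fun n => y n (T x)) atTop (nhds 0) := hy (T x)
    have hfreq : ∃ᶠ n in atTop, y n (T x) = -c := by
      have : ∃ᶠ n in atTop, n ∈ I k := Nat.frequently_atTop_iff_infinite.mpr (hIinf k)
      exact this.mono key
    have hc0 : -c = 0 := by
      by_contra hne
      have : ∀ᶠ z in nhds (0:ℝ), z ≠ -c := by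
        have : {(-c)}ᶜ ∈ nhds (0:ℝ) :=
          (isOpen_compl_singleton).mem_nhds (by simpa using (Ne.symm hne))
        filter_upwards [this] with z hz using hz
      have := (h1.frequently (p := fun z => z = -c) hfreq).and_eventually this
      obtain ⟨z, hz1, hz2⟩ := this.exists
      exact hz2 hz1
    have hcz : c = 0 := by linarith
    have hs : s k x = c * ((4:ℝ)^k * ‖v k‖) := by
      rw [hc]; exact (div_mul_cancel₀ _ hd.ne').symm
    rw [hs, hcz, zero_mul]
  obtain ⟨k, hk⟩ := hstotal x hx
  exact hk (hsz k)
end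

section
/- If U and V are Banach spaces and P: U → V is a bounded operator whose image is not closed, then the norm closure of P(B(U)) in V has empty interior, where B(U) is the closed unit ball of U. -/
open NormedSpace Metric ZeroAtInfty Filter Topology

theorem stmt9 {U V : Type*} [NormedAddCommGroup U] [NormedSpace ℝ U] [CompleteSpace U]
    [NormedAddCommGroup V] [NormedSpace ℝ V] [CompleteSpace V]
    (P : U →L[ℝ] V) (h : ¬IsClosed (Set.range P)) :
    interior (closure (P '' Metric.closedBall 0 1)) = ∅ := by
  by_contra hne
  obtain ⟨a, ha⟩ := Set.nonempty_iff_ne_empty.2 hne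
  rw [mem_interior_iff_mem_nhds, Metric.mem_nhds_iff] at ha
  obtain ⟨ε, εpos, H⟩ := ha
  -- Step 1: approximate preimages with controlled norm
  have hC : ∀ y : V, ∃ x : U, dist (P x) y ≤ 1 / 2 * ‖y‖ ∧ ‖x‖ ≤ 4 / ε * ‖y‖ := by
    intro y
    rcases eq_or_ne y 0 with rfl | hy
    · exact ⟨0, by simp⟩
    · have hy' : 0 < ‖y‖ := norm_pos_iff.2 hy
      set t : ℝ := ε / (2 * ‖y‖) with ht
      have tpos : 0 < t := by positivity
      set δ : ℝ := ε / 8 with hδ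
      have δpos : 0 < δ := by positivity
      have h₁ : a + t • y ∈ ball a ε := by
        simp only [mem_ball, dist_eq_norm, add_sub_cancel_left, norm_smul, Real.norm_eq_abs,
          abs_of_pos tpos, ht]
        have : |ε / (2 * ‖y‖)| * ‖y‖ = ε / 2 := by rw [abs_of_pos (by positivity)]; field_simp
        linarith
      have h₂ : a ∈ ball a ε := mem_ball_self εpos
      rcases Metric.mem_closure_iff.1 (H h₁) _ δpos with ⟨z₁, z₁im, hz₁⟩
      rcases Metric.mem_closure_iff.1 (H h₂) _ δpos with ⟨z₂, z₂im, hz₂⟩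
      rcases (Set.mem_image _ _ _).1 z₁im with ⟨x₁, hx₁, rfl⟩
      rcases (Set.mem_image _ _ _).1 z₂im with ⟨x₂, hx₂, rfl⟩
      rw [Metric.mem_closedBall, dist_zero_right] at hx₁ hx₂
      refine ⟨t⁻¹ • (x₁ - x₂), ?_, ?_⟩
      · have I : ‖P (x₁ - x₂) - t • y‖ ≤ 2 * δ := by
          calc ‖P (x₁ - x₂) - t • y‖ = ‖(P x₁ - (a + t • y)) - (P x₂ - a)‖ := by
                congr 1; simp only [map_sub]; abel
            _ ≤ ‖P x₁ - (a + t • y)‖ + ‖P x₂ - a‖ := norm_sub_le _ _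
            _ ≤ δ + δ := by
                rw [dist_eq_norm'] at hz₁ hz₂; exact add_le_add hz₁.le hz₂.le
            _ = 2 * δ := (two_mul _).symm
        have e1 : t⁻¹ • (P (x₁ - x₂) - t • y) = t⁻¹ • P (x₁ - x₂) - y := by
          rw [smul_sub, smul_smul, inv_mul_cancel₀ (ne_of_gt tpos), one_smul]
        have : dist (P (t⁻¹ • (x₁ - x₂))) y = t⁻¹ * ‖P (x₁ - x₂) - t • y‖ := by
          rw [dist_eq_norm, map_smul, ← e1, norm_smul, Real.norm_eq_abs,
            abs_of_pos (inv_pos.2 tpos)]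
        rw [this]
        calc t⁻¹ * ‖P (x₁ - x₂) - t • y‖ ≤ t⁻¹ * (2 * δ) := by
              exact mul_le_mul_of_nonneg_left I (le_of_lt (inv_pos.2 tpos))
          _ = 1 / 2 * ‖y‖ := by
              rw [ht, hδ]; field_simp; ring
      · calc ‖t⁻¹ • (x₁ - x₂)‖ = t⁻¹ * ‖x₁ - x₂‖ := by
              rw [norm_smul, Real.norm_eq_abs, abs_of_pos (inv_pos.2 tpos)]
          _ ≤ t⁻¹ * 2 := by
              refine mul_le_mul_of_nonneg_left ?_ (le_of_lt (inv_pos.2 tpos))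
              calc ‖x₁ - x₂‖ ≤ ‖x₁‖ + ‖x₂‖ := norm_sub_le _ _
                _ ≤ 2 := by linarith
          _ = 4 / ε * ‖y‖ := by rw [ht]; field_simp; ring
  -- Step 2: iterate to get exact preimages, hence surjectivity
  set C : ℝ := 4 / ε with hCdef
  have C0 : 0 ≤ C := by positivity
  have surj : Function.Surjective P := by
    choose g hg using hC
    set h' : V → V := fun y => y - P (g y) with hh'
    have hle : ∀ y, ‖h' y‖ ≤ 1 / 2 * ‖y‖ := by
      intro y
      rw [hh']
      simp only
      rw [← dist_eq_norm, dist_comm]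
      exact (hg y).1
    intro y
    have hnle : ∀ n : ℕ, ‖h'^[n] y‖ ≤ (1 / 2) ^ n * ‖y‖ := by
      intro n
      induction n with
      | zero => simp only [one_div, one_mul, Function.iterate_zero_apply, pow_zero, le_rfl]
      | succ n IH =>
        rw [Function.iterate_succ']
        apply le_trans (hle _) _
        rw [pow_succ', mul_assoc]
        gcongr
    set u : ℕ → U := fun n => g (h'^[n] y) with hu
    have ule : ∀ n, ‖u n‖ ≤ (1 / 2) ^ n * (C * ‖y‖) := fun n ↦ by
      apply le_trans (hg _).2
      calc
        C * ‖h'^[n] y‖ ≤ C * ((1 / 2) ^ n * ‖y‖) := mul_le_mul_of_nonneg_left (hnle n) C0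
        _ = (1 / 2) ^ n * (C * ‖y‖) := by ring
    have sNu : Summable fun n => ‖u n‖ := by
      refine .of_nonneg_of_le (fun n => norm_nonneg _) ule ?_
      exact Summable.mul_right _ (summable_geometric_of_lt_one (by norm_num) (by norm_num))
    have su : Summable u := sNu.of_norm
    set x := tsum u with hx
    have fsumeq : ∀ n : ℕ, P (∑ i ∈ Finset.range n, u i) = y - h'^[n] y := by
      intro n
      induction n with
      | zero => simp
      | succ n IH =>
        rw [Finset.sum_range_succ, map_add, IH, Function.iterate_succ_apply', sub_add]
    have htend : Tendsto (fun n => ∑ i ∈ Finset.range n, u i) atTop (𝓝 x) :=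
      su.hasSum.tendsto_sum_nat
    have L₁ : Tendsto (fun n => P (∑ i ∈ Finset.range n, u i)) atTop (𝓝 (P x)) :=
      (P.continuous.tendsto _).comp htend
    simp only [fsumeq] at L₁
    have L₂ : Tendsto (fun n => y - h'^[n] y) atTop (𝓝 (y - 0)) := by
      refine tendsto_const_nhds.sub ?_
      rw [tendsto_iff_norm_sub_tendsto_zero]
      simp only [sub_zero]
      refine squeeze_zero (fun _ => norm_nonneg _) hnle ?_
      rw [← zero_mul ‖y‖]
      refine (tendsto_pow_atTop_nhds_zero_of_lt_one ?_ ?_).mul tendsto_const_nhds <;> norm_num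
    have feq : P x = y - 0 := tendsto_nhds_unique L₁ L₂
    rw [sub_zero] at feq
    exact ⟨x, feq⟩
  exact h (by rw [Set.range_eq_univ.2 surj]; exact isClosed_univ)
end

section
/- Let P: U → V be a bounded operator between Banach spaces with nonclosed image, and let ε > 0. Then there exist a functional f ∈ V* and a bounded operator P₁: U → V such that f does not vanish identically on the range of P, the range of P − P₁ is at most one-dimensional, ‖P − P₁‖ ≤ ε, and the range of P₁ is contained in ker f ∩ cl(range P). -/
open NormedSpace Metric ZeroAtInfty Filter Topology

open Function Finset in
lemma surj_of_approx {E F : Type*} [NormedAddCommGroup E] [NormedSpace ℝ E] [CompleteSpace E]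
    [NormedAddCommGroup F] [NormedSpace ℝ F] (f : E →L[ℝ] F) (C : ℝ) (C0 : 0 ≤ C)
    (hC : ∀ y : F, ∃ x, dist (f x) y ≤ 1 / 2 * ‖y‖ ∧ ‖x‖ ≤ C * ‖y‖) :
    Function.Surjective f := by
  choose g hg using hC
  let h := fun y => y - f (g y)
  have hle : ∀ y, ‖h y‖ ≤ 1 / 2 * ‖y‖ := by
    intro y
    rw [← dist_eq_norm, dist_comm]
    exact (hg y).1
  intro y
  have hnle : ∀ n : ℕ, ‖h^[n] y‖ ≤ (1 / 2) ^ n * ‖y‖ := by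
    intro n
    induction n with
    | zero => simp only [one_div, one_mul, iterate_zero_apply, pow_zero, le_rfl]
    | succ n IH =>
      rw [iterate_succ']
      apply le_trans (hle _) _
      rw [pow_succ', mul_assoc]
      gcongr
  let u := fun n => g (h^[n] y)
  have ule : ∀ n, ‖u n‖ ≤ (1 / 2) ^ n * (C * ‖y‖) := fun n ↦ by
    apply le_trans (hg _).2
    calc
      C * ‖h^[n] y‖ ≤ C * ((1 / 2) ^ n * ‖y‖) := mul_le_mul_of_nonneg_left (hnle n) C0
      _ = (1 / 2) ^ n * (C * ‖y‖) := by ring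
  have sNu : Summable fun n => ‖u n‖ := by
    refine .of_nonneg_of_le (fun n => norm_nonneg _) ule ?_
    exact Summable.mul_right _ (summable_geometric_of_lt_one (by norm_num) (by norm_num))
  have su : Summable u := sNu.of_norm
  let x := tsum u
  have fsumeq : ∀ n : ℕ, f (∑ i ∈ Finset.range n, u i) = y - h^[n] y := by
    intro n
    induction n with
    | zero => simp [f.map_zero]
    | succ n IH => rw [sum_range_succ, f.map_add, IH, iterate_succ_apply', sub_add]
  have : Tendsto (fun n => ∑ i ∈ Finset.range n, u i) atTop (𝓝 x) := su.hasSum.tendsto_sum_nat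
  have L₁ : Tendsto (fun n => f (∑ i ∈ Finset.range n, u i)) atTop (𝓝 (f x)) :=
    (f.continuous.tendsto _).comp this
  simp only [fsumeq] at L₁
  have L₂ : Tendsto (fun n => y - h^[n] y) atTop (𝓝 (y - 0)) := by
    refine tendsto_const_nhds.sub ?_
    rw [tendsto_iff_norm_sub_tendsto_zero]
    simp only [sub_zero]
    refine squeeze_zero (fun _ => norm_nonneg _) hnle ?_
    rw [← zero_mul ‖y‖]
    refine (tendsto_pow_atTop_nhds_zero_of_lt_one ?_ ?_).mul tendsto_const_nhds <;> norm_num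
  have feq : f x = y - 0 := tendsto_nhds_unique L₁ L₂
  rw [sub_zero] at feq
  exact ⟨x, feq⟩

set_option maxHeartbeats 1000000 in
theorem stmt11 {U V : Type*} [NormedAddCommGroup U] [NormedSpace ℝ U] [CompleteSpace U]
    [NormedAddCommGroup V] [NormedSpace ℝ V] [CompleteSpace V]
    (P : U →L[ℝ] V) (h : ¬IsClosed (Set.range P)) (ε : ℝ) (hε : 0 < ε) :
    ∃ (f : StrongDual ℝ V) (P₁ : U →L[ℝ] V),
      (∃ u : U, f (P u) ≠ 0) ∧
      (∃ v : V, ∀ u : U, (P - P₁) u ∈ Submodule.span ℝ {v}) ∧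
      ‖P - P₁‖ ≤ ε ∧
      ∀ u : U, f (P₁ u) = 0 ∧ P₁ u ∈ closure (Set.range P) := by
  set C : Set V := closure (P '' Metric.closedBall 0 1) with hCdef
  have hC0 : (0 : V) ∈ C := subset_closure ⟨0, by simp, by simp⟩
  have hPmem : ∀ x : U, ‖x‖ ≤ 1 → P x ∈ C :=
    fun x hx => subset_closure ⟨x, by simpa [Metric.mem_closedBall, dist_eq_norm] using hx, rfl⟩
  -- Step 1: find a small point of the range outside C
  have key : ∃ u₀ : U, ‖P u₀‖ ≤ ε ∧ P u₀ ∉ C := by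
    by_contra hcon
    push_neg at hcon
    apply h
    -- the closure of the range, as a Banach space
    set W := (LinearMap.range (P : U →ₗ[ℝ] V)).topologicalClosure with hWdef
    have hWclosed : IsClosed (W : Set V) := Submodule.isClosed_topologicalClosure _
    haveI : CompleteSpace W := hWclosed.completeSpace_coe
    have hWeq : (W : Set V) = closure (Set.range P) := by
      rw [hWdef, Submodule.topologicalClosure_coe, LinearMap.coe_range,
        ContinuousLinearMap.coe_coe]
    have hmem : ∀ u : U, P u ∈ W := fun u =>
      Submodule.le_topologicalClosure _ (LinearMap.mem_range_self _ u)
    set T : U →L[ℝ] W := P.codRestrict W hmem with hTdef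
    have hsurj : Function.Surjective T := by
      apply surj_of_approx T (2 / ε) (by positivity)
      intro y
      rcases eq_or_ne y 0 with rfl | hy
      · exact ⟨0, by simp⟩
      have hyV : (y : V) ∈ closure (Set.range P) := by rw [← hWeq]; exact y.2
      have hyn : (0 : ℝ) < ‖(y : V)‖ := by
        simpa using norm_pos_iff.mpr (fun hz => hy (Subtype.coe_injective (by simpa using hz)))
      obtain ⟨w, hwr, hwd⟩ := Metric.mem_closure_iff.1 hyV (‖(y : V)‖ / 4) (by positivity)
      obtain ⟨u₁, rfl⟩ := hwr
      have hwy : ‖P u₁ - (y : V)‖ < ‖(y : V)‖ / 4 := by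
        rw [← dist_eq_norm, dist_comm]; exact hwd
      have habs := abs_norm_sub_norm_le (P u₁) (y : V)
      have hw_lb : ‖(y : V)‖ * (3 / 4) ≤ ‖P u₁‖ := by
        linarith [(abs_le.mp habs).1]
      have hw_pos : (0 : ℝ) < ‖P u₁‖ := lt_of_lt_of_le (by positivity) hw_lb
      have hw_ub : ‖P u₁‖ ≤ 2 * ‖(y : V)‖ := by
        linarith [(abs_le.mp habs).2]
      set t : ℝ := ε / ‖P u₁‖ with htdef
      have ht : 0 < t := by positivity
      have htw : ‖t • P u₁‖ ≤ ε := by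
        rw [norm_smul, Real.norm_eq_abs, abs_of_pos ht, htdef, div_mul_cancel₀ _ hw_pos.ne']
      have htwC : t • P u₁ ∈ C := by
        have : t • P u₁ = P (t • u₁) := by simp
        rw [this]; exact hcon _ (by rwa [← this])
      obtain ⟨z, hz, hzd⟩ := Metric.mem_closure_iff.1 htwC (t * (‖(y : V)‖ / 4)) (by positivity)
      obtain ⟨x', hx', rfl⟩ := hz
      have hx'1 : ‖x'‖ ≤ 1 := by simpa [Metric.mem_closedBall, dist_eq_norm] using hx'
      refine ⟨t⁻¹ • x', ?_, ?_⟩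
      · have h1 : ‖P (t⁻¹ • x') - P u₁‖ < ‖(y : V)‖ / 4 := by
          have : P (t⁻¹ • x') - P u₁ = t⁻¹ • (P x' - t • P u₁) := by
            rw [smul_sub, map_smul, smul_smul, inv_mul_cancel₀ ht.ne', one_smul]
          rw [this, norm_smul, Real.norm_eq_abs, abs_of_pos (by positivity)]
          calc t⁻¹ * ‖P x' - t • P u₁‖ < t⁻¹ * (t * (‖(y : V)‖ / 4)) := by
                apply mul_lt_mul_of_pos_left _ (by positivity)
                rw [← dist_eq_norm, dist_comm]; exact hzd
            _ = ‖(y : V)‖ / 4 := by field_simp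
        have hdist : dist (P (t⁻¹ • x')) (y : V) ≤ 1 / 2 * ‖(y : V)‖ := by
          rw [dist_eq_norm]
          calc ‖P (t⁻¹ • x') - (y : V)‖
              ≤ ‖P (t⁻¹ • x') - P u₁‖ + ‖P u₁ - (y : V)‖ := norm_sub_le_norm_sub_add_norm_sub _ _ _
            _ ≤ ‖(y : V)‖ / 4 + ‖(y : V)‖ / 4 := by linarith [h1, hwy]
            _ = 1 / 2 * ‖(y : V)‖ := by ring
        have : dist (T (t⁻¹ • x')) y = dist (P (t⁻¹ • x')) (y : V) := rfl
        rw [this]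
        simpa using hdist
      · have h2 : ‖t⁻¹ • x'‖ ≤ t⁻¹ := by
          rw [norm_smul, Real.norm_eq_abs, abs_of_pos (by positivity)]
          calc t⁻¹ * ‖x'‖ ≤ t⁻¹ * 1 := by
                apply mul_le_mul_of_nonneg_left hx'1 (by positivity)
            _ = t⁻¹ := mul_one _
        have h3 : t⁻¹ ≤ 2 / ε * ‖(y : V)‖ := by
          rw [htdef, inv_div]
          rw [div_le_iff₀ hε]
          calc ‖P u₁‖ ≤ 2 * ‖(y : V)‖ := hw_ub
            _ = 2 / ε * ‖(y : V)‖ * ε := by field_simp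
        have : ‖y‖ = ‖(y : V)‖ := rfl
        rw [this]
        linarith
    -- conclude range is closed
    have : closure (Set.range P) ⊆ Set.range P := by
      intro y hy
      have hyW : y ∈ W := by rw [← SetLike.mem_coe, hWeq]; exact hy
      obtain ⟨x, hx⟩ := hsurj ⟨y, hyW⟩
      exact ⟨x, congrArg Subtype.val hx⟩
    exact isClosed_of_closure_subset this
  obtain ⟨u₀, hw, hwC⟩ := key
  -- Step 2: separate P u₀ from C
  have hCconv : Convex ℝ C := ((convex_closedBall (0 : U) 1).linear_image (P : U →ₗ[ℝ] V)).closure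
  obtain ⟨f, s, hfC, hfs⟩ := geometric_hahn_banach_closed_point hCconv isClosed_closure hwC
  have hs : 0 < s := by simpa using hfC 0 hC0
  set f' : V →L[ℝ] ℝ := s⁻¹ • f with hf'def
  have hf'C : ∀ z ∈ C, f' z ≤ 1 := by
    intro z hz
    have : s⁻¹ * f z ≤ s⁻¹ * s :=
      mul_le_mul_of_nonneg_left (le_of_lt (hfC z hz)) (by positivity)
    rw [inv_mul_cancel₀ hs.ne'] at this
    simpa [hf'def] using this
  have ha : 1 < f' (P u₀) := by
    have : s⁻¹ * s < s⁻¹ * f (P u₀) := mul_lt_mul_of_pos_left hfs (by positivity)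
    rw [inv_mul_cancel₀ hs.ne'] at this
    simpa [hf'def] using this
  set a : ℝ := f' (P u₀) with hadef
  have ha0 : 0 < a := lt_trans one_pos ha
  -- bound |f' (P x)| ≤ ‖x‖
  have hb : ∀ x : U, |f' (P x)| ≤ ‖x‖ := by
    intro x
    rcases eq_or_ne x 0 with rfl | hx
    · simp
    have hn : (0 : ℝ) < ‖x‖ := norm_pos_iff.mpr hx
    have key1 : ∀ c : ℝ, |c| ≤ 1 → c * f' (P x) ≤ ‖x‖ := by
      intro c hc
      have h1 : ‖(c / ‖x‖) • x‖ ≤ 1 := by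
        rw [norm_smul, Real.norm_eq_abs, abs_div, abs_of_pos hn, div_mul_cancel₀ _ hn.ne']
        exact hc
      have := hf'C _ (hPmem _ h1)
      rw [map_smul, map_smul, smul_eq_mul] at this
      have h2 : c / ‖x‖ * f' (P x) ≤ 1 := this
      calc c * f' (P x) = ‖x‖ * (c / ‖x‖ * f' (P x)) := by field_simp
        _ ≤ ‖x‖ * 1 := mul_le_mul_of_nonneg_left h2 hn.le
        _ = ‖x‖ := mul_one _
    rw [abs_le]
    constructor
    · have := key1 (-1) (by norm_num)
      linarith
    · have := key1 1 (by norm_num)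
      linarith
  clear_value a
  clear hf'C
  clear_value f'
  clear hCdef hC0 hPmem hwC hfC hfs
  -- build the functional and the operator
  refine ⟨a⁻¹ • f', P - ContinuousLinearMap.smulRight ((a⁻¹ • f').comp P) (P u₀), ?_, ?_, ?_, ?_⟩
  · refine ⟨u₀, ?_⟩
    rw [ContinuousLinearMap.smul_apply, smul_eq_mul, ← hadef, inv_mul_cancel₀ ha0.ne']
    norm_num
  · refine ⟨P u₀, fun u => ?_⟩
    have : (P - (P - ContinuousLinearMap.smulRight ((a⁻¹ • f').comp P) (P u₀))) u
        = ((a⁻¹ • f') (P u)) • P u₀ := by simp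
    rw [this]
    exact Submodule.smul_mem _ _ (Submodule.mem_span_singleton_self _)
  · rw [sub_sub_cancel]
    apply ContinuousLinearMap.opNorm_le_bound _ hε.le
    intro x
    rw [ContinuousLinearMap.smulRight_apply, ContinuousLinearMap.comp_apply, norm_smul]
    have h1 : ‖(a⁻¹ • f') (P x)‖ ≤ a⁻¹ * ‖x‖ := by
      have : (a⁻¹ • f') (P x) = a⁻¹ * f' (P x) := by simp
      rw [this, Real.norm_eq_abs, abs_mul, abs_of_pos (by positivity)]
      exact mul_le_mul_of_nonneg_left (hb x) (by positivity)
    have h2 : a⁻¹ * ‖x‖ ≤ ‖x‖ := by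
      have hinv : a⁻¹ ≤ 1 := by nlinarith [inv_mul_cancel₀ ha0.ne', inv_nonneg.mpr ha0.le]
      nlinarith [norm_nonneg x]
    calc ‖(a⁻¹ • f') (P x)‖ * ‖P u₀‖ ≤ ‖x‖ * ε := by
          apply mul_le_mul (le_trans h1 h2) hw (norm_nonneg _) (norm_nonneg _)
      _ = ε * ‖x‖ := mul_comm _ _
  · intro u
    constructor
    · have hgw : (a⁻¹ • f') (P u₀) = 1 := by
        rw [ContinuousLinearMap.smul_apply, smul_eq_mul, ← hadef, inv_mul_cancel₀ ha0.ne']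
      simp only [ContinuousLinearMap.sub_apply, ContinuousLinearMap.smulRight_apply,
        ContinuousLinearMap.comp_apply, map_sub, map_smul, smul_eq_mul, hgw]
      ring
    · refine subset_closure ⟨u - ((a⁻¹ • f') (P u)) • u₀, ?_⟩
      simp [map_sub, map_smul, smul_smul]
end

section
/- Let M* contain a closed norming subspace V of infinite codimension, let {z_i} be a normalized basic sequence in M*/V with lifts m_i* ∈ M*, ‖m_i*‖ ≤ 2, and let X = V ⊕ ℓ¹. Define H: X → M* by H(v, (a_i)) = v + Σ_i (a_i/i) m_i*. Then H is injective, bounded, but not an isomorphic embedding, and H*(M) ⊆ X* is a total nonnorming subspace of X*. -/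
open NormedSpace Metric ZeroAtInfty Filter Topology

def IsBasicSeq {E : Type*} [SeminormedAddCommGroup E] [NormedSpace ℝ E] (z : ℕ → E) : Prop :=
  (∀ i, z i ≠ 0) ∧ ∃ K > 0, ∀ n m : ℕ, n ≤ m → ∀ a : ℕ → ℝ,
    ‖∑ i ∈ Finset.range n, a i • z i‖ ≤ K * ‖∑ i ∈ Finset.range m, a i • z i‖

set_option maxHeartbeats 1000000 in
set_option synthInstance.maxHeartbeats 400000 in
theorem stmt15 {M : Type*} [NormedAddCommGroup M] [NormedSpace ℝ M] [CompleteSpace M]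
    (V : Submodule ℝ (StrongDual ℝ M)) (hVc : IsClosed (V : Set (StrongDual ℝ M)))
    (c : ℝ) (hc : 0 < c) (hVn : ∀ m : M, c * ‖m‖ ≤ dualSup V m)
    (hcodim : ¬FiniteDimensional ℝ (StrongDual ℝ M ⧸ V))
    (z : ℕ → StrongDual ℝ M ⧸ V) (hznorm : ∀ i, ‖z i‖ = 1) (hzbasic : IsBasicSeq z)
    (m' : ℕ → StrongDual ℝ M) (hm2 : ∀ i, ‖m' i‖ ≤ 2) (hmz : ∀ i, V.mkQ (m' i) = z i)
    (H : (↥V × lp (fun _ : ℕ => ℝ) 1) →L[ℝ] StrongDual ℝ M)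
    (hH : ∀ p : ↥V × lp (fun _ : ℕ => ℝ) 1,
      H p = (p.1 : StrongDual ℝ M) + ∑' i : ℕ, ((p.2 i) / ((i : ℝ) + 1)) • m' i) :
    Function.Injective H ∧
    (¬∃ c' > 0, ∀ p : ↥V × lp (fun _ : ℕ => ℝ) 1, c' * ‖p‖ ≤ ‖H p‖) ∧
    IsTotalSub (X := ↥V × lp (fun _ : ℕ => ℝ) 1) (LinearMap.range H.flip.toLinearMap) ∧ ¬IsNorming (X := ↥V × lp (fun _ : ℕ => ℝ) 1) (LinearMap.range H.flip.toLinearMap) := by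
  classical
  obtain ⟨hz0, K, hK, hKb⟩ := hzbasic
  -- the quotient map as a continuous linear map
  let Q : StrongDual ℝ M →L[ℝ] (StrongDual ℝ M ⧸ V) :=
    V.mkQL
  have hQ : ∀ x, Q x = V.mkQ x := fun x => rfl
  -- summability of the series
  have hsum : ∀ a : lp (fun _ : ℕ => ℝ) 1,
      Summable (fun i : ℕ => ((a i) / ((i : ℝ) + 1)) • m' i) := by
    intro a
    have ha : Summable (fun i => ‖a i‖) := by
      have := (lp.memℓp a).summable (by norm_num : (0:ℝ) < (1 : ENNReal).toReal)
      simpa using this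
    apply Summable.of_norm
    refine Summable.of_nonneg_of_le (fun i => norm_nonneg _) (fun i => ?_) (ha.mul_left 2)
    rw [norm_smul]
    have h1 : ‖a i / ((i : ℝ) + 1)‖ ≤ ‖a i‖ := by
      rw [Real.norm_eq_abs, Real.norm_eq_abs, abs_div]
      rw [abs_of_pos (by positivity : (0:ℝ) < (i : ℝ) + 1)]
      apply div_le_self (abs_nonneg _)
      simp
    calc ‖a i / ((i : ℝ) + 1)‖ * ‖m' i‖ ≤ ‖a i‖ * 2 :=
          mul_le_mul h1 (hm2 i) (norm_nonneg _) (norm_nonneg _)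
      _ = 2 * ‖a i‖ := mul_comm _ _
  -- trivial kernel
  have hker : ∀ p : ↥V × lp (fun _ : ℕ => ℝ) 1, H p = 0 → p = 0 := by
    rintro ⟨v, a⟩ hp
    set b : ℕ → ℝ := fun i => a i / ((i : ℝ) + 1) with hbdef
    have key : (v : StrongDual ℝ M) + ∑' i : ℕ, b i • m' i = 0 := by
      rw [← hH (v, a)]; exact hp
    have hsa : Summable (fun i : ℕ => b i • m' i) := hsum a
    have hq : (∑' i : ℕ, b i • z i) = 0 := by
      haveI : IsClosed (V : Set (StrongDual ℝ M)) := hVc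
      have h0 := congrArg Q key
      rw [map_add, Q.map_tsum hsa, map_zero] at h0
      have hv : Q (v : StrongDual ℝ M) = 0 := by
        rw [hQ, Submodule.mkQ_apply, Submodule.Quotient.mk_eq_zero]
        exact v.2
      rw [hv, zero_add] at h0
      rw [← h0]
      exact tsum_congr fun i => by rw [map_smul, hQ, hmz]
    have hsz : Summable (fun i : ℕ => b i • z i) := by
      have := hsa.map Q.toLinearMap.toAddMonoidHom Q.continuous
      refine this.congr fun i => ?_
      show Q (b i • m' i) = b i • z i
      rw [map_smul, hQ, hmz]
    have hz : HasSum (fun i : ℕ => b i • z i) 0 := hq ▸ hsz.hasSum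
    have ht := hz.tendsto_sum_nat
    have hS0 : ∀ n, ‖∑ i ∈ Finset.range n, b i • z i‖ ≤ 0 := by
      intro n
      have h1 : Tendsto (fun m => K * ‖∑ i ∈ Finset.range m, b i • z i‖) atTop (𝓝 (K * 0)) := by
        have := Filter.Tendsto.norm (E := StrongDual ℝ M ⧸ V) ht
        rw [norm_zero (E := StrongDual ℝ M ⧸ V)] at this
        exact this.const_mul K
      rw [mul_zero] at h1
      refine ge_of_tendsto h1 ?_
      filter_upwards [eventually_ge_atTop n] with m hm
      exact hKb n m hm b
    have hb0 : ∀ n, b n = 0 := by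
      intro n
      have h1 : ‖b n • z n‖ ≤ 0 := by
        have hdiff : b n • z n = (∑ i ∈ Finset.range (n + 1), b i • z i)
            - ∑ i ∈ Finset.range n, b i • z i := by
          rw [Finset.sum_range_succ]; abel
        rw [hdiff]
        calc ‖(∑ i ∈ Finset.range (n + 1), b i • z i) - ∑ i ∈ Finset.range n, b i • z i‖
            ≤ ‖∑ i ∈ Finset.range (n + 1), b i • z i‖ + ‖∑ i ∈ Finset.range n, b i • z i‖ :=
              norm_sub_le (E := StrongDual ℝ M ⧸ V) _ _
          _ ≤ 0 + 0 := add_le_add (hS0 _) (hS0 _)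
          _ = 0 := add_zero 0
      haveI : IsClosed (V : Set (StrongDual ℝ M)) := hVc
      have h2 := (norm_le_zero_iff (E := StrongDual ℝ M ⧸ V)).mp h1
      exact (smul_eq_zero.mp h2).resolve_right (hz0 n)
    have ha0 : a = 0 := by
      apply lp.ext
      funext i
      have := hb0 i
      rw [hbdef] at this
      simp only at this
      have hne : ((i : ℝ) + 1) ≠ 0 := by positivity
      have : a i = 0 := by
        rcases div_eq_zero_iff.mp this with h | h
        · exact h
        · exact absurd h hne
      simpa [this] using this.symm ▸ rfl
    have hv0 : (v : StrongDual ℝ M) = 0 := by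
      have hts : (∑' i : ℕ, b i • m' i) = 0 := by
        rw [tsum_congr fun i => by rw [hb0 i, zero_smul]]
        exact tsum_zero
      rw [hts, add_zero] at key
      exact key
    have : v = 0 := Subtype.ext hv0
    simp [this, ha0, Prod.ext_iff]
  have hinj : Function.Injective H := by
    intro p q hpq
    have := hker (p - q) (by rw [map_sub H p q, hpq, sub_self])
    exact sub_eq_zero.mp this
  -- not bounded below
  have hnoemb : ¬∃ c' > 0, ∀ p : ↥V × lp (fun _ : ℕ => ℝ) 1, c' * ‖p‖ ≤ ‖H p‖ := by
    rintro ⟨c', hc', hbelow⟩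
    obtain ⟨N, hN⟩ := exists_nat_gt (2 / c')
    set p : ↥V × lp (fun _ : ℕ => ℝ) 1 := (0, lp.single 1 N (1 : ℝ)) with hpdef
    have hsn : ‖lp.single (E := fun _ : ℕ => ℝ) 1 N (1 : ℝ)‖ = 1 := by
      have := lp.norm_single (E := fun _ : ℕ => ℝ) (p := 1) (by norm_num) N (1 : ℝ)
      simpa using this
    have hpn : ‖p‖ = 1 := by
      rw [hpdef, Prod.norm_def]
      simp [hsn]
    have hHp : H p = ((1 : ℝ) / ((N : ℝ) + 1)) • m' N := by
      rw [hH]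
      have h1 : (p.1 : StrongDual ℝ M) = 0 := rfl
      rw [h1, zero_add]
      rw [tsum_eq_single N (fun j hj => ?_)]
      · have h2 : (p.2) N = (1 : ℝ) := by
          rw [hpdef]; exact lp.single_apply_self (E := fun _ : ℕ => ℝ) 1 N (1 : ℝ)
        rw [h2]
      · have h2 : (p.2) j = 0 := by
          rw [hpdef]; exact lp.single_apply_ne (E := fun _ : ℕ => ℝ) 1 N (1 : ℝ) hj
        rw [h2, zero_div, zero_smul]
    have hle : ‖H p‖ ≤ 2 / ((N : ℝ) + 1) := by
      rw [hHp, norm_smul, Real.norm_eq_abs, abs_of_pos (by positivity)]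
      rw [div_mul_eq_mul_div, one_mul, div_le_div_iff₀ (by positivity) (by positivity)]
      calc ‖m' N‖ * ((N:ℝ) + 1) ≤ 2 * ((N:ℝ)+1) :=
        mul_le_mul_of_nonneg_right (hm2 N) (by positivity)
        _ = 2 * ((N:ℝ)+1) := rfl
    have hc2 : 2 / ((N : ℝ) + 1) < c' := by
      rw [div_lt_iff₀ (by positivity)]
      rw [div_lt_iff₀ hc'] at hN
      nlinarith
    have := hbelow p
    rw [hpn, mul_one] at this
    linarith
  -- H (f, 0) = f for f ∈ V
  have hHV : ∀ (f : StrongDual ℝ M) (hf : f ∈ V), H (⟨f, hf⟩, 0) = f := by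
    intro f hf
    rw [hH]
    have h2 : (∑' i : ℕ, (((0 : lp (fun _ : ℕ => ℝ) 1) i) / ((i : ℝ) + 1)) • m' i) = 0 := by
      rw [tsum_congr fun i => ?_]
      · exact tsum_zero
      · show (((0 : lp (fun _ : ℕ => ℝ) 1) i) / ((i : ℝ) + 1)) • m' i = 0
        have : (0 : lp (fun _ : ℕ => ℝ) 1) i = 0 := rfl
        rw [this, zero_div, zero_smul]
    show f + _ = f
    rw [h2, add_zero]
  set Hf := ContinuousLinearMap.flip (𝕜 := ℝ) (𝕜₂ := ℝ) (𝕜₃ := ℝ) (E := ↥V × lp (fun _ : ℕ => ℝ) 1) (F := M) (G := ℝ) H with hHf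
  -- flip is bounded below
  have hflip : ∀ m : M, c * ‖m‖ ≤ ‖Hf m‖ := by
    intro m
    refine le_trans (hVn m) (Real.sSup_le ?_ (norm_nonneg _))
    rintro r ⟨f, hfV, hf1, rfl⟩
    have heval : Hf m (⟨f, hfV⟩, 0) = f m := by
      rw [hHf, ContinuousLinearMap.flip_apply, hHV f hfV]
    have hnq : ‖((⟨f, hfV⟩, 0) : ↥V × lp (fun _ : ℕ => ℝ) 1)‖ ≤ 1 := by
      rw [Prod.norm_def]
      simp only [norm_zero]
      refine max_le ?_ zero_le_one
      exact hf1
    calc |f m| = ‖Hf m (⟨f, hfV⟩, 0)‖ := by rw [heval, Real.norm_eq_abs]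
      _ ≤ ‖Hf m‖ * ‖((⟨f, hfV⟩, 0) : ↥V × lp (fun _ : ℕ => ℝ) 1)‖ :=
          (Hf m).le_opNorm _
      _ ≤ ‖Hf m‖ * 1 := mul_le_mul_of_nonneg_left hnq (norm_nonneg _)
      _ = ‖Hf m‖ := mul_one _
  -- total
  have htotal : IsTotalSub (X := ↥V × lp (fun _ : ℕ => ℝ) 1) (LinearMap.range Hf.toLinearMap) := by
    intro p hp
    have hHp : H p ≠ 0 := fun h0 => hp (hker p h0)
    obtain ⟨m, hm⟩ : ∃ m, H p m ≠ 0 := by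
      by_contra hcon
      push_neg at hcon
      exact hHp (ContinuousLinearMap.ext fun m => by rw [hcon m]; rfl)
    exact ⟨Hf m, LinearMap.mem_range.mpr ⟨m, rfl⟩,
      by rwa [hHf, ContinuousLinearMap.flip_apply]⟩
  refine ⟨hinj, hnoemb, htotal, ?_⟩
  rintro ⟨c', hc', hn⟩
  apply hnoemb
  refine ⟨c * c', by positivity, fun p => ?_⟩
  have h2 : dualSup (LinearMap.range Hf.toLinearMap) p ≤ ‖H p‖ / c := by
    refine Real.sSup_le ?_ (by positivity)
    rintro r ⟨f, hf, hf1, rfl⟩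
    obtain ⟨m, rfl⟩ := LinearMap.mem_range.mp hf
    have hm : ‖m‖ ≤ 1 / c := by
      have h3 := hflip m
      rw [le_div_iff₀ hc]
      have hf1' : ‖Hf m‖ ≤ 1 := hf1
      nlinarith
    calc |Hf m p| = ‖H p m‖ := by rw [hHf, ContinuousLinearMap.flip_apply, Real.norm_eq_abs]
      _ ≤ ‖H p‖ * ‖m‖ := (H p).le_opNorm m
      _ ≤ ‖H p‖ * (1 / c) := mul_le_mul_of_nonneg_left hm (norm_nonneg _)
      _ = ‖H p‖ / c := by ring
  have h3 : c' * ‖p‖ ≤ ‖H p‖ / c := (hn p).trans h2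
  calc c * c' * ‖p‖ = c * (c' * ‖p‖) := by ring
    _ ≤ c * (‖H p‖ / c) := mul_le_mul_of_nonneg_left h3 hc.le
    _ = ‖H p‖ := by field_simp
end

section
/- Let Γ be a set with card(Γ) > 2^𝔠 and X = ℓ¹ ⊕ ℓ²(Γ). Then every total subspace M of X* is norming over some infinite-dimensional closed subspace of X; in particular X* contains no total nowhere norming subspace. -/
open NormedSpace Metric ZeroAtInfty Filter Topology

section Aux

open Cardinal

noncomputable abbrev myE1 : Type := lp (fun _ : ℕ => ℝ) 1
noncomputable abbrev myE2 (Γ : Type) : Type := lp (fun _ : Γ => ℝ) 2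

lemma card_dual_l1 : #(StrongDual ℝ myE1) ≤ continuum := by
  classical
  have hinj : Function.Injective (fun (g : StrongDual ℝ myE1) => fun n : ℕ => g (lp.single 1 n 1)) := by
    intro g1 g2 h
    ext f
    have hs := lp.hasSum_single (E := fun _ : ℕ => ℝ) (p := 1) (by norm_num) f
    have h1 : HasSum (fun n => g1 (lp.single 1 n (f n))) (g1 f) := g1.hasSum hs
    have h2 : HasSum (fun n => g2 (lp.single 1 n (f n))) (g2 f) := g2.hasSum hs
    have key : ∀ n, g1 (lp.single 1 n (f n)) = g2 (lp.single 1 n (f n)) := by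
      intro n
      have hone : lp.single (E := fun _ : ℕ => ℝ) 1 n (f n) = (f n) • lp.single 1 n 1 := by
        rw [← lp.single_smul]; norm_num
      rw [hone, map_smul, map_smul]
      have := congrFun h n
      simp only at this
      rw [this]
    rw [funext key] at h1
    exact h1.unique h2
  calc #(StrongDual ℝ myE1) ≤ #(ℕ → ℝ) := Cardinal.mk_le_of_injective hinj
    _ = continuum ^ aleph0 := by rw [← Cardinal.power_def, Cardinal.mk_real, Cardinal.mk_nat]
    _ = continuum := continuum_power_aleph0

lemma card_fd {V : Type} [AddCommGroup V] [Module ℝ V] (h : FiniteDimensional ℝ V) :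
    Cardinal.mk V ≤ continuum := by
  rw [cardinalMk_eq_cardinalMk_field_pow_rank ℝ V, Cardinal.mk_real]
  calc continuum ^ Module.rank ℝ V ≤ continuum ^ aleph0 :=
        Cardinal.power_le_power_left continuum_ne_zero (Module.rank_lt_aleph0 ℝ V).le
    _ = continuum := continuum_power_aleph0

variable {Γ : Type}

/-- the functional `(a,b) ↦ ⟪g, b⟫`, as a linear map in `g`. -/
noncomputable def Psi (Γ : Type) : myE2 Γ →ₗ[ℝ] StrongDual ℝ (myE1 × myE2 Γ) where
  toFun g := (innerSL ℝ g).comp (ContinuousLinearMap.snd ℝ myE1 (myE2 Γ))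
  map_add' g g' := ContinuousLinearMap.ext fun z => by simp [inner_add_left]
  map_smul' c g := ContinuousLinearMap.ext fun z => by simp [real_inner_smul_left]

lemma Psi_apply (g : myE2 Γ) (z : myE1 × myE2 Γ) : Psi Γ g z = inner ℝ g z.2 := rfl

lemma Psi_norm_le (g : myE2 Γ) (hg : ‖g‖ ≤ 1) : ‖Psi Γ g‖ ≤ 1 := by
  refine ContinuousLinearMap.opNorm_le_bound _ zero_le_one (fun z => ?_)
  rw [Psi_apply]
  calc ‖(inner ℝ g z.2 : ℝ)‖ ≤ ‖g‖ * ‖z.2‖ := norm_inner_le_norm g z.2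
    _ ≤ 1 * ‖z‖ := by
        have := norm_snd_le z
        nlinarith [norm_nonneg z, norm_nonneg g, norm_nonneg z.2]

/-- any functional vanishing on the first factor is `Psi` of something. -/
lemma exists_Psi (f : StrongDual ℝ (myE1 × myE2 Γ)) (hf : ∀ a : myE1, f (a, 0) = 0) :
    ∃ g : myE2 Γ, Psi Γ g = f := by
  refine ⟨(InnerProductSpace.toDual ℝ (myE2 Γ)).symm
    (f.comp (ContinuousLinearMap.inr ℝ myE1 (myE2 Γ))), ?_⟩
  refine ContinuousLinearMap.ext fun z => ?_
  rw [Psi_apply, InnerProductSpace.toDual_symm_apply]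
  calc f.comp (ContinuousLinearMap.inr ℝ myE1 (myE2 Γ)) z.2 = f (0, z.2) := rfl
    _ = f (z.1, 0) + f (0, z.2) := by rw [hf z.1]; ring
    _ = f z := by rw [← map_add]; congr 1; simp

set_option maxHeartbeats 2000000 in
set_option synthInstance.maxHeartbeats 400000 in
lemma key (hΓ : 2 ^ continuum < #Γ)
    (M : Submodule ℝ (StrongDual ℝ (myE1 × myE2 Γ))) (hM : IsTotalSub M) :
    ∃ L : Submodule ℝ (myE1 × myE2 Γ), IsClosed (L : Set (myE1 × myE2 Γ)) ∧
      ¬FiniteDimensional ℝ L ∧ IsNormingOver M L := by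
  classical
  letI : AddCommGroup ↥M := M.addCommGroup
  -- restriction to the first factor
  set R : StrongDual ℝ (myE1 × myE2 Γ) →ₗ[ℝ] StrongDual ℝ myE1 :=
    { toFun := fun f => f.comp (ContinuousLinearMap.inl ℝ myE1 (myE2 Γ))
      map_add' := fun f g => ContinuousLinearMap.ext fun z => rfl
      map_smul' := fun c f => ContinuousLinearMap.ext fun z => rfl } with hR
  set R' := R.domRestrict M with hR'
  set K := LinearMap.ker R' with hKdef
  -- M has cardinality greater than continuum
  have hcardM : ¬ (#↥M ≤ continuum) := by
    intro hle
    have hX : #(myE1 × myE2 Γ) ≤ 2 ^ continuum := by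
      have hinj : Function.Injective
          (fun x : myE1 × myE2 Γ => fun f : ↥M => (f : StrongDual ℝ (myE1 × myE2 Γ)) x) := by
        intro x y hxy
        by_contra hne
        obtain ⟨f, hfM, hf⟩ := hM (x - y) (sub_ne_zero.mpr hne)
        have hxy' := congrFun hxy ⟨f, hfM⟩
        simp only at hxy'
        apply hf
        rw [map_sub, hxy', sub_self]
      calc #(myE1 × myE2 Γ) ≤ #(↥M → ℝ) := mk_le_of_injective hinj
        _ = continuum ^ #↥M := by rw [← Cardinal.power_def, Cardinal.mk_real]
        _ ≤ continuum ^ continuum := Cardinal.power_le_power_left continuum_ne_zero hle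
        _ = 2 ^ continuum := Cardinal.power_self_eq aleph0_le_continuum
    have hGam : #Γ ≤ #(myE1 × myE2 Γ) := by
      have hinj : Function.Injective
          (fun γ : Γ => ((0, lp.single 2 γ (1:ℝ)) : myE1 × myE2 Γ)) := by
        intro γ γ' h
        by_contra hne
        have h2 := congrArg Prod.snd h
        have h3 := congrFun (congrArg (fun v : myE2 Γ => (v : ∀ _ : Γ, ℝ)) h2) γ
        simp only at h3
        rw [lp.single_apply_self, lp.single_apply_ne (E := fun _ : Γ => ℝ) 2 γ' (1:ℝ) hne] at h3
        exact one_ne_zero h3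
      exact mk_le_of_injective hinj
    exact absurd ((hΓ.trans_le hGam).trans_le hX) (lt_irrefl _)
  -- the kernel of the restriction is infinite dimensional
  have hK : ¬ FiniteDimensional ℝ ↥K := by
    intro hfd
    apply hcardM
    obtain ⟨W, hW⟩ := Submodule.exists_isCompl K
    have hWle : #↥W ≤ continuum := by
      have eW : (↥M ⧸ K) ≃ₗ[ℝ] ↥W := Submodule.quotientEquivOfIsCompl K W hW
      have eR : (↥M ⧸ K) ≃ₗ[ℝ] LinearMap.range R' := R'.quotKerEquivRange
      calc #↥W = #(↥M ⧸ K) := (Cardinal.mk_congr eW.toEquiv).symm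
        _ = #(LinearMap.range R') := Cardinal.mk_congr eR.toEquiv
        _ ≤ #(StrongDual ℝ myE1) := mk_le_of_injective Subtype.val_injective
        _ ≤ continuum := card_dual_l1
    calc #↥M = #(↥K × ↥W) := (Cardinal.mk_congr (Submodule.prodEquivOfIsCompl K W hW).toEquiv).symm
      _ = #↥K * #↥W := by rw [Cardinal.mk_prod, Cardinal.lift_id, Cardinal.lift_id]
      _ ≤ continuum * continuum := mul_le_mul' (card_fd hfd) hWle
      _ = continuum := Cardinal.mul_eq_self aleph0_le_continuum
  -- pull back to a subspace of ℓ²(Γ)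
  set N : Submodule ℝ (myE2 Γ) := M.comap (Psi Γ) with hNdef
  have hN : ¬ FiniteDimensional ℝ ↥N := by
    intro hfd
    apply hK
    have hle : K.map M.subtype ≤ N.map (Psi Γ) := by
      rintro f ⟨⟨f, hfM⟩, hker, rfl⟩
      have hf0 : ∀ a : myE1, f (a, 0) = 0 := by
        intro a
        have h0 : R' ⟨f, hfM⟩ = 0 := hker
        have := congrArg (fun t : StrongDual ℝ myE1 => t a) h0
        simpa [hR', hR] using this
      obtain ⟨g, hg⟩ := exists_Psi f hf0
      exact ⟨g, show Psi Γ g ∈ M from hg ▸ hfM, hg⟩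
    haveI h1 : FiniteDimensional ℝ ↥(N.map (Psi Γ)) := Module.Finite.map N (Psi Γ)
    haveI h2 : FiniteDimensional ℝ ↥(K.map M.subtype) := Submodule.finiteDimensional_of_le hle
    exact Module.Finite.equiv (Submodule.equivMapOfInjective M.subtype (Submodule.injective_subtype M) K).symm
  refine ⟨(⊥ : Submodule ℝ myE1).prod N.topologicalClosure, ?_, ?_, ?_⟩
  · have : (((⊥ : Submodule ℝ myE1).prod N.topologicalClosure : Submodule ℝ (myE1 × myE2 Γ)) :
        Set (myE1 × myE2 Γ)) = (⊥ : Submodule ℝ myE1) ×ˢ (N.topologicalClosure : Set (myE2 Γ)) := rfl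
    rw [this]
    refine IsClosed.prod ?_ N.isClosed_topologicalClosure
    rw [Submodule.bot_coe]
    exact isClosed_singleton
  · intro hfd
    apply hN
    set j : ↥N →ₗ[ℝ] ↥((⊥ : Submodule ℝ myE1).prod N.topologicalClosure) :=
      LinearMap.codRestrict _ ((LinearMap.inr ℝ myE1 (myE2 Γ)).comp N.subtype)
        (fun b => by
          rw [Submodule.mem_prod]
          exact ⟨Submodule.zero_mem _, N.le_topologicalClosure b.2⟩) with hj
    have hjinj : Function.Injective j := by
      intro a b hab
      have := congrArg (Subtype.val) hab
      simp only [hj, LinearMap.codRestrict_apply, LinearMap.comp_apply] at this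
      exact Subtype.val_injective (LinearMap.inr_injective this)
    exact FiniteDimensional.of_injective j hjinj
  · refine ⟨1/2, by norm_num, fun x hx => ?_⟩
    rw [Submodule.mem_prod] at hx
    obtain ⟨hx1, hx2⟩ := hx
    rw [Submodule.mem_bot] at hx1
    set S := {r : ℝ | ∃ f ∈ M, ‖f‖ ≤ 1 ∧ r = |f x|} with hS
    have hdual : dualSup M x = sSup S := rfl
    have hbdd : BddAbove S := by
      refine ⟨‖x‖, fun r hr => ?_⟩
      obtain ⟨f, _, hf1, rfl⟩ := hr
      calc |f x| ≤ ‖f‖ * ‖x‖ := f.le_opNorm x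
        _ ≤ 1 * ‖x‖ := by nlinarith [norm_nonneg x]
        _ = ‖x‖ := one_mul _
    have h0S : (0:ℝ) ∈ S := ⟨0, Submodule.zero_mem M, by simp, by simp⟩
    by_cases hb : x.2 = 0
    · have hx0 : x = 0 := Prod.ext hx1 hb
      rw [hdual]
      calc (1/2 : ℝ) * ‖x‖ = 0 := by rw [hx0]; simp
        _ ≤ sSup S := le_csSup hbdd h0S
    · set b := x.2 with hbdef
      have hbpos : 0 < ‖b‖ := norm_pos_iff.mpr hb
      have hcl : b ∈ closure (N : Set (myE2 Γ)) := by
        rw [← Submodule.topologicalClosure_coe]; exact hx2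
      obtain ⟨b₀, hb₀N, hb₀⟩ : ∃ b₀ ∈ (N : Set (myE2 Γ)), dist b b₀ < ‖b‖/4 := by
        rw [Metric.mem_closure_iff] at hcl
        exact hcl (‖b‖/4) (by positivity)
      have hdist : ‖b - b₀‖ < ‖b‖/4 := by rwa [← dist_eq_norm]
      have hb₀norm : ‖b₀‖ ≤ (5/4) * ‖b‖ := by
        have := norm_sub_norm_le b₀ b
        have h2 : ‖b₀ - b‖ < ‖b‖/4 := by rwa [norm_sub_rev]
        linarith
      have hb₀pos : 0 < ‖b₀‖ := by
        have := norm_sub_norm_le b b₀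
        linarith
      set g : myE2 Γ := ‖b₀‖⁻¹ • b₀ with hg
      have hgN : g ∈ N := N.smul_mem _ hb₀N
      have hgnorm : ‖g‖ = 1 := norm_smul_inv_norm (by
        intro h0; rw [h0] at hb₀pos; simp at hb₀pos)
      have hinner : (3/4) * ‖b‖^2 ≤ inner ℝ b₀ b := by
        have h1 : (inner ℝ b₀ b : ℝ) = inner ℝ b b - inner ℝ (b - b₀) b := by
          rw [inner_sub_left]; ring
        have h2 : (inner ℝ (b - b₀) b : ℝ) ≤ ‖b - b₀‖ * ‖b‖ := real_inner_le_norm _ _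
        have h3 : (inner ℝ b b : ℝ) = ‖b‖^2 := real_inner_self_eq_norm_sq b
        nlinarith
      have hfx : (1/2) * ‖b‖ ≤ Psi Γ g x := by
        rw [Psi_apply, ← hbdef, hg, real_inner_smul_left]
        have hkey : (1/2) * ‖b‖ * ‖b₀‖ ≤ inner ℝ b₀ b := by nlinarith
        calc (1/2) * ‖b‖ = ((1/2) * ‖b‖ * ‖b₀‖) / ‖b₀‖ := by field_simp
          _ ≤ (inner ℝ b₀ b : ℝ) / ‖b₀‖ := (div_le_div_iff_of_pos_right hb₀pos).mpr hkey
          _ = ‖b₀‖⁻¹ * inner ℝ b₀ b := by rw [div_eq_inv_mul]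
      have hmem : |Psi Γ g x| ∈ S := ⟨Psi Γ g, hgN, Psi_norm_le g (le_of_eq hgnorm), rfl⟩
      have hxnorm : ‖x‖ = ‖b‖ := by
        have : x = (0, b) := Prod.ext hx1 rfl
        rw [this, Prod.norm_def]
        simp [hbpos.le]
      rw [hdual, hxnorm]
      calc (1/2) * ‖b‖ ≤ Psi Γ g x := hfx
        _ ≤ |Psi Γ g x| := le_abs_self _
        _ ≤ sSup S := le_csSup hbdd hmem

end Aux

theorem stmt17 {Γ : Type} (hΓ : 2 ^ Cardinal.continuum < Cardinal.mk Γ) :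
    (∀ M : Submodule ℝ (StrongDual ℝ ((lp (fun _ : ℕ => ℝ) 1) × (lp (fun _ : Γ => ℝ) 2))),
      IsTotalSub M →
        ∃ L : Submodule ℝ ((lp (fun _ : ℕ => ℝ) 1) × (lp (fun _ : Γ => ℝ) 2)),
          IsClosed (L : Set ((lp (fun _ : ℕ => ℝ) 1) × (lp (fun _ : Γ => ℝ) 2))) ∧
          ¬FiniteDimensional ℝ L ∧ IsNormingOver M L) ∧
    ¬∃ M : Submodule ℝ (StrongDual ℝ ((lp (fun _ : ℕ => ℝ) 1) × (lp (fun _ : Γ => ℝ) 2))),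
        IsTotalSub M ∧ NowhereNorming M := by
  constructor
  · intro M hM
    exact key hΓ M hM
  · rintro ⟨M, hM, hNN⟩
    obtain ⟨L, hLc, hLfd, c, hc, hnorm⟩ := key hΓ M hM
    obtain ⟨x, hxL, hlt⟩ := hNN L hLc hLfd c hc
    exact absurd (hnorm x hxL) (not_le.mpr hlt)
end
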